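/- arXiv:2401.04983 — 4 statements merged into one kernel-verified Lean document; each statement's English description precedes it below -/
import Mathlib

section
/- For the unit Euclidean disc D = {x ∈ ℝ² : |x| < 1} and points x, y ∈ D with x ≠ y, let m be the intersection of the ray from x through y with the boundary ∂D. Then the Funk distance d_F(x,y) = log(|x−m|/|y−m|) satisfies the triangle inequality: d_F(x,z) ≤ d_F(x,y) + d_F(y,z) for all x, y, z ∈ D. -/
open scoped RealInnerProductSpace

section Aux

variable {E : Type*} [NormedAddCommGroup E] [InnerProductSpace ℝ E]

private lemma inner_lt_one' (a x : E) (ha : ‖a‖ = 1) (hx : ‖x‖ < 1) : ⟪a, x⟫ < 1 :=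
  calc ⟪a, x⟫ ≤ ‖a‖ * ‖x‖ := real_inner_le_norm a x
  _ = ‖x‖ := by rw [ha, one_mul]
  _ < 1 := hx

private lemma t_gt_one (x y m : E) (hx : ‖x‖ < 1) (hy : ‖y‖ < 1) (hm : ‖m‖ = 1)
    (t : ℝ) (ht : 0 < t) (hmeq : m = x + t • (y - x)) : 1 < t := by
  by_contra h
  push_neg at h
  have hm' : m = (1 - t) • x + t • y := by
    rw [hmeq, smul_sub]; module
  have : ‖m‖ < 1 := by
    calc ‖m‖ ≤ ‖(1 - t) • x‖ + ‖t • y‖ := by rw [hm']; exact norm_add_le _ _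
    _ = (1 - t) * ‖x‖ + t * ‖y‖ := by
        rw [norm_smul, norm_smul, Real.norm_eq_abs, Real.norm_eq_abs,
          abs_of_nonneg (by linarith), abs_of_nonneg ht.le]
    _ < (1 - t) * 1 + t * 1 := by
        rcases eq_or_lt_of_le h with h1 | h1
        · have : t * ‖y‖ < t * 1 := by
            apply mul_lt_mul_of_pos_left hy ht
          nlinarith [norm_nonneg x]
        · have h2 : (1 - t) * ‖x‖ < (1 - t) * 1 := mul_lt_mul_of_pos_left hx (by linarith)
          nlinarith [norm_nonneg y, mul_le_mul_of_nonneg_left hy.le ht.le]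
    _ = 1 := by ring
  rw [hm] at this
  linarith

private lemma norm_ratio_eq (x y m : E) (hxy : x ≠ y)
    (t : ℝ) (ht1 : 1 < t) (hmeq : m = x + t • (y - x)) :
    ‖x - m‖ / ‖y - m‖ = t / (t - 1) := by
  have hxm : x - m = (-t) • (y - x) := by rw [hmeq]; module
  have hym : y - m = (1 - t) • (y - x) := by rw [hmeq]; module
  have hc : (0:ℝ) < ‖y - x‖ := by
    rw [norm_pos_iff, sub_ne_zero]; exact fun h => hxy h.symm
  rw [hxm, hym, norm_smul, norm_smul, Real.norm_eq_abs, Real.norm_eq_abs,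
    abs_of_neg (by linarith : -t < 0), abs_of_neg (by linarith : 1 - t < 0)]
  rw [neg_neg, neg_sub]
  exact mul_div_mul_right _ _ hc.ne'

private lemma inner_ratio_eq (x y m : E) (hy : ‖y‖ < 1) (hm : ‖m‖ = 1)
    (t : ℝ) (ht1 : 1 < t) (hmeq : m = x + t • (y - x)) :
    (1 - ⟪m, x⟫) / (1 - ⟪m, y⟫) = t / (t - 1) := by
  have hmm : ⟪m, m⟫ = 1 := by
    rw [real_inner_self_eq_norm_sq, hm]; norm_num
  have h1 : 1 - ⟪m, x⟫ = t * ⟪m, y - x⟫ := by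
    have : ⟪m, m⟫ = ⟪m, x⟫ + t * ⟪m, y - x⟫ := by
      nth_rewrite 2 [hmeq]
      rw [inner_add_right, inner_smul_right]
    linarith [this, hmm]
  have h2 : 1 - ⟪m, y⟫ = (t - 1) * ⟪m, y - x⟫ := by
    have : ⟪m, y⟫ = ⟪m, x⟫ + ⟪m, y - x⟫ := by
      rw [inner_sub_right]; ring
    nlinarith [h1]
  have hBpos : (0:ℝ) < 1 - ⟪m, y⟫ := by
    have := inner_lt_one' m y hm hy; linarith
  have hcpos : (0:ℝ) < ⟪m, y - x⟫ := by
    by_contra hc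
    push_neg at hc
    nlinarith [h2]
  rw [h1, h2]
  rw [mul_comm t _, mul_comm (t-1) _]
  exact mul_div_mul_left _ _ hcpos.ne'

private lemma inner_ratio_le (x y m a : E) (hy : ‖y‖ < 1) (hm : ‖m‖ = 1) (ha : ‖a‖ = 1)
    (t : ℝ) (ht1 : 1 < t) (hmeq : m = x + t • (y - x)) :
    (1 - ⟪a, x⟫) / (1 - ⟪a, y⟫) ≤ t / (t - 1) := by
  have hBpos : (0:ℝ) < 1 - ⟪a, y⟫ := by
    have := inner_lt_one' a y ha hy; linarith
  have ham : ⟪a, m⟫ ≤ 1 := by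
    calc ⟪a, m⟫ ≤ ‖a‖ * ‖m‖ := real_inner_le_norm a m
    _ = 1 := by rw [ha, hm, one_mul]
  have hexp : ⟪a, m⟫ = ⟪a, x⟫ + t * (⟪a, y⟫ - ⟪a, x⟫) := by
    nth_rewrite 1 [hmeq]
    rw [inner_add_right, inner_smul_right, inner_sub_right]
  rw [div_le_div_iff₀ hBpos (by linarith)]
  nlinarith [ham, hexp]

end Aux

/-- Triangle inequality for the Funk distance on the Euclidean unit disc. -/
theorem funk_triangle_inequality
    (x y z m₁ m₂ m₃ : EuclideanSpace ℝ (Fin 2))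
    (hx : ‖x‖ < 1) (hy : ‖y‖ < 1) (hz : ‖z‖ < 1)
    (hxy : x ≠ y) (hyz : y ≠ z) (hxz : x ≠ z)
    (hm₁ : ‖m₁‖ = 1) (ht₁ : ∃ t : ℝ, 0 < t ∧ m₁ = x + t • (y - x))
    (hm₂ : ‖m₂‖ = 1) (ht₂ : ∃ t : ℝ, 0 < t ∧ m₂ = y + t • (z - y))
    (hm₃ : ‖m₃‖ = 1) (ht₃ : ∃ t : ℝ, 0 < t ∧ m₃ = x + t • (z - x)) :
    Real.log (‖x - m₃‖ / ‖z - m₃‖) ≤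
      Real.log (‖x - m₁‖ / ‖y - m₁‖) + Real.log (‖y - m₂‖ / ‖z - m₂‖) := by
  obtain ⟨t₁, ht₁0, hm₁eq⟩ := ht₁
  obtain ⟨t₂, ht₂0, hm₂eq⟩ := ht₂
  obtain ⟨t₃, ht₃0, hm₃eq⟩ := ht₃
  have ht₁1 : 1 < t₁ := t_gt_one x y m₁ hx hy hm₁ t₁ ht₁0 hm₁eq
  have ht₂1 : 1 < t₂ := t_gt_one y z m₂ hy hz hm₂ t₂ ht₂0 hm₂eq
  have ht₃1 : 1 < t₃ := t_gt_one x z m₃ hx hz hm₃ t₃ ht₃0 hm₃eq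
  -- positivity of inner-product denominators w.r.t. m₃
  have hA : (0:ℝ) < 1 - ⟪m₃, x⟫ := by have := inner_lt_one' m₃ x hm₃ hx; linarith
  have hB : (0:ℝ) < 1 - ⟪m₃, y⟫ := by have := inner_lt_one' m₃ y hm₃ hy; linarith
  have hC : (0:ℝ) < 1 - ⟪m₃, z⟫ := by have := inner_lt_one' m₃ z hm₃ hz; linarith
  -- ratios
  have e₁ : ‖x - m₁‖ / ‖y - m₁‖ = t₁ / (t₁ - 1) := norm_ratio_eq x y m₁ hxy t₁ ht₁1 hm₁eq
  have e₂ : ‖y - m₂‖ / ‖z - m₂‖ = t₂ / (t₂ - 1) := norm_ratio_eq y z m₂ hyz t₂ ht₂1 hm₂eq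
  have e₃ : ‖x - m₃‖ / ‖z - m₃‖ = t₃ / (t₃ - 1) := norm_ratio_eq x z m₃ hxz t₃ ht₃1 hm₃eq
  have e₃' : (1 - ⟪m₃, x⟫) / (1 - ⟪m₃, z⟫) = t₃ / (t₃ - 1) :=
    inner_ratio_eq x z m₃ hz hm₃ t₃ ht₃1 hm₃eq
  have le₁ : (1 - ⟪m₃, x⟫) / (1 - ⟪m₃, y⟫) ≤ t₁ / (t₁ - 1) :=
    inner_ratio_le x y m₁ m₃ hy hm₁ hm₃ t₁ ht₁1 hm₁eq
  have le₂ : (1 - ⟪m₃, y⟫) / (1 - ⟪m₃, z⟫) ≤ t₂ / (t₂ - 1) :=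
    inner_ratio_le y z m₂ m₃ hz hm₂ hm₃ t₂ ht₂1 hm₂eq
  have hs₁ : (0:ℝ) < t₁ / (t₁ - 1) := div_pos (by linarith) (by linarith)
  have hs₂ : (0:ℝ) < t₂ / (t₂ - 1) := div_pos (by linarith) (by linarith)
  have hprod : t₃ / (t₃ - 1) ≤ (t₁ / (t₁ - 1)) * (t₂ / (t₂ - 1)) := by
    have : (1 - ⟪m₃, x⟫) / (1 - ⟪m₃, z⟫)
        = ((1 - ⟪m₃, x⟫) / (1 - ⟪m₃, y⟫)) * ((1 - ⟪m₃, y⟫) / (1 - ⟪m₃, z⟫)) := by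
      rw [div_mul_div_comm, mul_comm (1 - ⟪m₃, y⟫) (1 - ⟪m₃, z⟫),
        mul_div_mul_right _ _ hB.ne']
    calc t₃ / (t₃ - 1) = ((1 - ⟪m₃, x⟫) / (1 - ⟪m₃, y⟫)) * ((1 - ⟪m₃, y⟫) / (1 - ⟪m₃, z⟫)) := by
          rw [← this, e₃']
    _ ≤ (t₁ / (t₁ - 1)) * (t₂ / (t₂ - 1)) := by
          apply mul_le_mul le₁ le₂ (div_nonneg hB.le hC.le) hs₁.le
  rw [e₁, e₂, e₃, ← Real.log_mul hs₁.ne' hs₂.ne']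
  exact Real.log_le_log (div_pos (by linarith) (by linarith)) hprod
end

section
/- Let r ∈ (0,1) and define on D_E(r) the Riemannian metric a_{ij}(x) = (1/(r²−|x|²)²)·((r²−|x|²)δ_{ij} + x^i x^j) and the 1-form coefficients b_i(x) = (1−r²)x^i/((r²−|x|²)(1−|x|²)). Then the α-norm of β satisfies ||β||²_α = a^{ij} b_i b_j = |x|²(1−r²)²/(r²(1−|x|²)²), and this quantity is strictly less than 1 for all x ∈ D_E(r). Consequently F = α + β is a Randers metric on D_E(r). -/
/-- The `α`-norm of the 1-form `β` of the Funk-Finsler metric is `< 1`, so `F = α + β`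
is a Randers metric. -/
theorem funk_beta_norm_lt_one (r : ℝ) (hr0 : 0 < r) (hr1 : r < 1)
    (x : EuclideanSpace ℝ (Fin 2)) (hx : ‖x‖ < r)
    (a : Matrix (Fin 2) (Fin 2) ℝ)
    (ha : a = Matrix.of fun i j =>
      (1 / (r ^ 2 - ‖x‖ ^ 2) ^ 2) *
        ((r ^ 2 - ‖x‖ ^ 2) * (if i = j then 1 else 0) + x i * x j))
    (b : Fin 2 → ℝ)
    (hb : b = fun i => (1 - r ^ 2) * x i / ((r ^ 2 - ‖x‖ ^ 2) * (1 - ‖x‖ ^ 2))) :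
    (∑ i, ∑ j, a⁻¹ i j * b i * b j =
        ‖x‖ ^ 2 * (1 - r ^ 2) ^ 2 / (r ^ 2 * (1 - ‖x‖ ^ 2) ^ 2)) ∧
      ‖x‖ ^ 2 * (1 - r ^ 2) ^ 2 / (r ^ 2 * (1 - ‖x‖ ^ 2) ^ 2) < 1 := by
  have hx0 : (0:ℝ) ≤ ‖x‖ := norm_nonneg x
  have hS2 : ‖x‖ ^ 2 = x 0 ^ 2 + x 1 ^ 2 := by
    rw [EuclideanSpace.norm_eq, Real.sq_sqrt (by positivity)]
    simp [Fin.sum_univ_two, sq_abs]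
  have hlt : ‖x‖ ^ 2 < r ^ 2 := by nlinarith
  have h1 : ‖x‖ ^ 2 < 1 := by nlinarith
  have hd : 0 < r ^ 2 - ‖x‖ ^ 2 := by linarith
  have h1s : 0 < 1 - ‖x‖ ^ 2 := by linarith
  have hdne : r ^ 2 - ‖x‖ ^ 2 ≠ 0 := ne_of_gt hd
  have h1ne : (1:ℝ) - ‖x‖ ^ 2 ≠ 0 := ne_of_gt h1s
  have hrne : r ≠ 0 := ne_of_gt hr0
  have hdne2 : r ^ 2 - (x 0 ^ 2 + x 1 ^ 2) ≠ 0 := by rw [← hS2]; exact hdne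
  have hainv : a⁻¹ = Matrix.of fun i j =>
      (r ^ 2 - ‖x‖ ^ 2) * ((if i = j then 1 else 0) - x i * x j / r ^ 2) := by
    apply Matrix.inv_eq_right_inv
    ext i j
    rw [Matrix.mul_apply, Fin.sum_univ_two, ha]
    simp only [Matrix.of_apply, Matrix.one_apply]
    fin_cases i <;> fin_cases j <;>
      simp only [Fin.zero_eta, Fin.mk_one, Fin.isValue, if_true, if_false,
        reduceIte, one_ne_zero, zero_ne_one] <;>
      · rw [hS2] at hdne ⊢
        field_simp
        ring
  rw [hainv, hb]
  constructor
  · rw [Fin.sum_univ_two, Fin.sum_univ_two, Fin.sum_univ_two]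
    simp only [Matrix.of_apply, Fin.isValue, if_true, if_false,
       reduceIte, one_ne_zero, zero_ne_one]
    rw [hS2] at hdne h1ne ⊢
    field_simp
    ring
  · rw [div_lt_one (by positivity)]
    nlinarith [mul_pos hd (show (0:ℝ) < 1 - r ^ 2 * ‖x‖ ^ 2 by nlinarith)]
end

section
/- Let r ∈ (0,1), b_i(x) = (1−r²)x^i/((r²−|x|²)(1−|x|²)) on D_E(r), and let Γ^k_{ij}(x) = (x^iδ_{kj} + x^jδ_{ki})/(r²−|x|²). Then the covariant derivative b_{i|j} := ∂b_i/∂x^j − b_k Γ^k_{ij} equals ((1−r²)/((r²−|x|²)(1−|x|²)))·(δ_{ij} + 2x^ix^j/(1−|x|²)); in particular b_{i|j} = b_{j|i} for all i, j. -/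
set_option maxHeartbeats 1000000

/-- Covariant derivative of the 1-form coefficients `b_i` of the Funk-Finsler metric with
respect to the Klein metric, and its symmetry. -/
theorem funk_covariant_derivative (r : ℝ) (hr0 : 0 < r) (hr1 : r < 1)
    (b : Fin 2 → EuclideanSpace ℝ (Fin 2) → ℝ)
    (hb : ∀ i x, b i x = (1 - r ^ 2) * x i / ((r ^ 2 - ‖x‖ ^ 2) * (1 - ‖x‖ ^ 2)))
    (Γ : Fin 2 → Fin 2 → Fin 2 → EuclideanSpace ℝ (Fin 2) → ℝ)
    (hΓ : ∀ k i j x, Γ k i j x =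
      (x i * (if k = j then 1 else 0) + x j * (if k = i then 1 else 0)) /
        (r ^ 2 - ‖x‖ ^ 2))
    (x : EuclideanSpace ℝ (Fin 2)) (hx : ‖x‖ < r) :
    (∀ i j, fderiv ℝ (b i) x (EuclideanSpace.single j 1) - ∑ k, b k x * Γ k i j x =
        ((1 - r ^ 2) / ((r ^ 2 - ‖x‖ ^ 2) * (1 - ‖x‖ ^ 2))) *
          ((if i = j then 1 else 0) + 2 * x i * x j / (1 - ‖x‖ ^ 2))) ∧
      ∀ i j, fderiv ℝ (b i) x (EuclideanSpace.single j 1) - ∑ k, b k x * Γ k i j x =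
        fderiv ℝ (b j) x (EuclideanSpace.single i 1) - ∑ k, b k x * Γ k j i x := by
  classical
  have hn1 : ‖x‖ ^ 2 < r ^ 2 := by
    nlinarith [norm_nonneg x]
  have hd1 : 0 < r ^ 2 - ‖x‖ ^ 2 := by linarith
  have hd2 : 0 < 1 - ‖x‖ ^ 2 := by nlinarith
  have hnorm : ∀ y : EuclideanSpace ℝ (Fin 2), ‖y‖ ^ 2 = ∑ k, y k * y k := by
    intro y
    rw [EuclideanSpace.norm_eq, Real.sq_sqrt (by positivity)]
    simp [Real.norm_eq_abs, sq_abs, sq]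
  set N : EuclideanSpace ℝ (Fin 2) → ℝ := fun y => ∑ k, y k * y k with hNdef
  have hNx : N x = ‖x‖ ^ 2 := (hnorm x).symm
  have hNd : HasFDerivAt N
      (∑ k, ((x k) • (EuclideanSpace.proj k : EuclideanSpace ℝ (Fin 2) →L[ℝ] ℝ)
        + (x k) • (EuclideanSpace.proj k : EuclideanSpace ℝ (Fin 2) →L[ℝ] ℝ))) x := by
    apply HasFDerivAt.fun_sum
    intro k _
    exact ((EuclideanSpace.proj (𝕜 := ℝ) k).hasFDerivAt (x := x)).mul
      ((EuclideanSpace.proj (𝕜 := ℝ) k).hasFDerivAt (x := x))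
  set N' : EuclideanSpace ℝ (Fin 2) →L[ℝ] ℝ :=
    ∑ k, ((x k) • (EuclideanSpace.proj k : EuclideanSpace ℝ (Fin 2) →L[ℝ] ℝ)
        + (x k) • (EuclideanSpace.proj k : EuclideanSpace ℝ (Fin 2) →L[ℝ] ℝ)) with hN'def
  have hN'app : ∀ j : Fin 2, N' (EuclideanSpace.single j 1) = 2 * x j := by
    intro j
    simp [hN'def, ContinuousLinearMap.sum_apply, ContinuousLinearMap.add_apply,
      ContinuousLinearMap.smul_apply, EuclideanSpace.single_apply, smul_eq_mul]
    fin_cases j <;> norm_num [Fin.sum_univ_two] <;> simp [Fin.mk_zero, Fin.mk_one, two_mul]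
  set v : EuclideanSpace ℝ (Fin 2) → ℝ := fun y => (r ^ 2 - N y) * (1 - N y) with hvdef
  have hvx : v x ≠ 0 := by
    simp only [hvdef, hNx]
    positivity
  have hvd : HasFDerivAt v ((r ^ 2 - N x) • (-N') + (1 - N x) • (-N')) x :=
    (hNd.const_sub (r ^ 2)).mul (hNd.const_sub 1)
  have hinv : HasFDerivAt (fun y => (v y)⁻¹)
      ((-(v x ^ 2)⁻¹) • ((r ^ 2 - N x) • (-N') + (1 - N x) • (-N'))) x := by
    have h := (hasDerivAt_inv hvx).comp_hasFDerivAt x hvd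
    simp only [Function.comp_def] at h
    simpa using h
  have key : ∀ i j : Fin 2,
      fderiv ℝ (b i) x (EuclideanSpace.single j 1) =
        (1 - r ^ 2) * x i * ((-(v x ^ 2)⁻¹) *
            ((r ^ 2 - N x) * (-(2 * x j)) + (1 - N x) * (-(2 * x j))))
          + (v x)⁻¹ * ((1 - r ^ 2) * (if i = j then 1 else 0)) := by
    intro i j
    have hu : HasFDerivAt (fun y : EuclideanSpace ℝ (Fin 2) => (1 - r ^ 2) * y i)
        ((1 - r ^ 2) • (EuclideanSpace.proj i : EuclideanSpace ℝ (Fin 2) →L[ℝ] ℝ)) x :=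
      ((EuclideanSpace.proj (𝕜 := ℝ) i).hasFDerivAt (x := x)).const_mul _
    have hbi : b i = fun y => ((1 - r ^ 2) * y i) * (v y)⁻¹ := by
      funext y
      rw [hb, hnorm y, div_eq_mul_inv]
    have hder : HasFDerivAt (b i)
        (((1 - r ^ 2) * x i) • ((-(v x ^ 2)⁻¹) • ((r ^ 2 - N x) • (-N') + (1 - N x) • (-N')))
          + (v x)⁻¹ • ((1 - r ^ 2) • (EuclideanSpace.proj i : EuclideanSpace ℝ (Fin 2) →L[ℝ] ℝ))) x := by
      rw [hbi]
      exact hu.mul hinv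
    rw [hder.fderiv]
    simp [ContinuousLinearMap.add_apply, ContinuousLinearMap.smul_apply, hN'app j,
      EuclideanSpace.single_apply, smul_eq_mul]
    ring
  have hsum : ∀ i j : Fin 2, ∑ k, b k x * Γ k i j x
      = (b j x * x i + b i x * x j) / (r ^ 2 - ‖x‖ ^ 2) := by
    intro i j
    simp only [hΓ, ← mul_div_assoc]
    rw [← Finset.sum_div]
    congr 1
    simp [mul_add, mul_ite, Finset.sum_add_distrib, Finset.sum_ite_eq', mul_comm]
  have main : ∀ i j : Fin 2,
      fderiv ℝ (b i) x (EuclideanSpace.single j 1) - ∑ k, b k x * Γ k i j x =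
        ((1 - r ^ 2) / ((r ^ 2 - ‖x‖ ^ 2) * (1 - ‖x‖ ^ 2))) *
          ((if i = j then 1 else 0) + 2 * x i * x j / (1 - ‖x‖ ^ 2)) := by
    intro i j
    rw [key i j, hsum i j, hb, hb]
    simp only [hvdef, hNx]
    by_cases hij : i = j
    · simp only [hij, if_pos rfl]
      field_simp
      ring
    · simp only [if_neg hij]
      field_simp
      ring
  refine ⟨main, fun i j => ?_⟩
  rw [main i j, main j i]
  have hij : (if i = j then (1:ℝ) else 0) = (if j = i then (1:ℝ) else 0) := by
    simp [eq_comm]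
  rw [hij]
  ring
end

section
/- Let r ∈ (0,1), and let F be the Funk-Finsler metric on D_E(r), F(x,ξ) = α(x,ξ) + β(x,ξ) with α(x,ξ) = √((r²−|x|²)|ξ|² + ⟨x,ξ⟩²)/(r²−|x|²) and β(x,ξ) = (1−r²)⟨x,ξ⟩/((r²−|x|²)(1−|x|²)). At x = 0, the flag curvature K(0,ξ) computed from the formula K = (3(φ/(2F))² − ψ/(2F) − α²)/F² with φ = b_{i|j}ξ^iξ^j and ψ = b_{i|j|k}ξ^iξ^jξ^k satisfies K(0,ξ) = −(1 − (3/4)(1−r²)²) for every ξ ≠ 0; in particular the flag curvature at the origin is a negative constant independent of direction (for r close to 1). -/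
set_option synthInstance.maxHeartbeats 1000000
set_option maxHeartbeats 1000000

open scoped RealInnerProductSpace

section Aux

local notation "E" => EuclideanSpace ℝ (Fin 2)

lemma aux_mul_zero {f g : E → ℝ} (hf : HasFDerivAt f (0 : E →L[ℝ] ℝ) (0 : E))
    (hg : HasFDerivAt g (0 : E →L[ℝ] ℝ) (0 : E)) :
    HasFDerivAt (fun x => f x * g x) (0 : E →L[ℝ] ℝ) (0 : E) := by
  refine (hf.mul hg).congr_fderiv ?_
  simp

lemma aux_div_zero {f g : E → ℝ} (hf : HasFDerivAt f (0 : E →L[ℝ] ℝ) (0 : E))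
    (hg : HasFDerivAt g (0 : E →L[ℝ] ℝ) (0 : E)) (hg0 : g 0 ≠ 0) :
    HasFDerivAt (fun x => f x / g x) (0 : E →L[ℝ] ℝ) (0 : E) := by
  have hinv : HasFDerivAt (fun x : E => (g x)⁻¹) (0 : E →L[ℝ] ℝ) (0 : E) := by
    have h := (hasFDerivAt_inv' (𝕜 := ℝ) hg0).comp (0 : E) hg
    refine h.congr_fderiv ?_
    simp
  simp only [div_eq_mul_inv]
  exact aux_mul_zero hf hinv

lemma aux_normsq_fderiv : HasFDerivAt (fun x : E => ‖x‖ ^ 2) (0 : E →L[ℝ] ℝ) (0 : E) := by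
  have h := (hasStrictFDerivAt_norm_sq (0 : E)).hasFDerivAt
  refine h.congr_fderiv ?_
  ext y
  simp

lemma aux_B_fderiv (r : ℝ) (hr0 : 0 < r) (i j : Fin 2) :
    HasFDerivAt (fun x : E =>
      ((1 - r ^ 2) / ((r ^ 2 - ‖x‖ ^ 2) * (1 - ‖x‖ ^ 2))) *
        ((if i = j then (1:ℝ) else 0) + 2 * x i * x j / (1 - ‖x‖ ^ 2)))
      (0 : E →L[ℝ] ℝ) (0 : E) := by
  have hN := aux_normsq_fderiv
  have h1 : HasFDerivAt (fun x : E => r ^ 2 - ‖x‖ ^ 2) (0 : E →L[ℝ] ℝ) (0 : E) := by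
    refine ((hasFDerivAt_const (r ^ 2) (0 : E)).sub hN).congr_fderiv ?_
    simp
  have h2 : HasFDerivAt (fun x : E => 1 - ‖x‖ ^ 2) (0 : E →L[ℝ] ℝ) (0 : E) := by
    refine ((hasFDerivAt_const (1 : ℝ) (0 : E)).sub hN).congr_fderiv ?_
    simp
  have hden : HasFDerivAt (fun x : E => (r ^ 2 - ‖x‖ ^ 2) * (1 - ‖x‖ ^ 2))
      (0 : E →L[ℝ] ℝ) (0 : E) := aux_mul_zero h1 h2
  have hdne : ((r ^ 2 - ‖(0:E)‖ ^ 2) * (1 - ‖(0:E)‖ ^ 2)) ≠ 0 := by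
    simp only [norm_zero]
    norm_num
    positivity
  have hA : HasFDerivAt (fun x : E => (1 - r ^ 2) / ((r ^ 2 - ‖x‖ ^ 2) * (1 - ‖x‖ ^ 2)))
      (0 : E →L[ℝ] ℝ) (0 : E) :=
    aux_div_zero (hasFDerivAt_const (1 - r ^ 2) (0 : E)) hden hdne
  have hxi : HasFDerivAt (fun x : E => x i) (EuclideanSpace.proj i : E →L[ℝ] ℝ) (0 : E) :=
    (EuclideanSpace.proj i : E →L[ℝ] ℝ).hasFDerivAt
  have hxj : HasFDerivAt (fun x : E => x j) (EuclideanSpace.proj j : E →L[ℝ] ℝ) (0 : E) :=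
    (EuclideanSpace.proj j : E →L[ℝ] ℝ).hasFDerivAt
  have hprod : HasFDerivAt (fun x : E => 2 * x i * x j) (0 : E →L[ℝ] ℝ) (0 : E) := by
    have h := ((hxi.const_mul 2).mul hxj)
    refine h.congr_fderiv ?_
    ext y
    simp
  have h1ne : ((fun x : E => 1 - ‖x‖ ^ 2) (0 : E)) ≠ 0 := by simp
  have hq : HasFDerivAt (fun x : E => 2 * x i * x j / (1 - ‖x‖ ^ 2))
      (0 : E →L[ℝ] ℝ) (0 : E) := aux_div_zero hprod h2 h1ne
  have hsum : HasFDerivAt (fun x : E =>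
      (if i = j then (1:ℝ) else 0) + 2 * x i * x j / (1 - ‖x‖ ^ 2))
      (0 : E →L[ℝ] ℝ) (0 : E) := by
    refine ((hasFDerivAt_const (if i = j then (1:ℝ) else 0) (0 : E)).add hq).congr_fderiv ?_
    simp
  exact aux_mul_zero hA hsum

end Aux

/-- The flag curvature of the Funk-Finsler metric at the center of the Klein unit disc is
the negative constant `-(1 - (3/4)(1-r²)²)`, independent of the direction `ξ`. -/
theorem funk_flag_curvature_at_origin (r : ℝ) (hr0 : 0 < r) (hr1 : r < 1)
    (Γ : Fin 2 → Fin 2 → Fin 2 → EuclideanSpace ℝ (Fin 2) → ℝ)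
    (hΓ : ∀ k i j x, Γ k i j x =
      (x i * (if k = j then 1 else 0) + x j * (if k = i then 1 else 0)) /
        (r ^ 2 - ‖x‖ ^ 2))
    (B : Fin 2 → Fin 2 → EuclideanSpace ℝ (Fin 2) → ℝ)
    (hB : ∀ i j x, B i j x =
      ((1 - r ^ 2) / ((r ^ 2 - ‖x‖ ^ 2) * (1 - ‖x‖ ^ 2))) *
        ((if i = j then 1 else 0) + 2 * x i * x j / (1 - ‖x‖ ^ 2)))
    (B3 : Fin 2 → Fin 2 → Fin 2 → EuclideanSpace ℝ (Fin 2) → ℝ)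
    (hB3 : ∀ i j k x, B3 i j k x =
      fderiv ℝ (B i j) x (EuclideanSpace.single k 1) -
        (∑ m, B i m x * Γ m j k x) - ∑ m, B j m x * Γ m i k x)
    (ξ : EuclideanSpace ℝ (Fin 2)) (hξ : ξ ≠ 0) :
    let x0 : EuclideanSpace ℝ (Fin 2) := 0
    let α := Real.sqrt ((r ^ 2 - ‖x0‖ ^ 2) * ‖ξ‖ ^ 2 + ⟪x0, ξ⟫ ^ 2) / (r ^ 2 - ‖x0‖ ^ 2)
    let F := α + (1 - r ^ 2) * ⟪x0, ξ⟫ / ((r ^ 2 - ‖x0‖ ^ 2) * (1 - ‖x0‖ ^ 2))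
    let φ := ∑ i, ∑ j, B i j x0 * ξ i * ξ j
    let ψ := ∑ i, ∑ j, ∑ k, B3 i j k x0 * ξ i * ξ j * ξ k
    (3 * (φ / (2 * F)) ^ 2 - ψ / (2 * F) - α ^ 2) / F ^ 2 =
      -(1 - (3 / 4) * (1 - r ^ 2) ^ 2) := by
  intro x0 α F φ ψ
  have hBfun : ∀ i j, B i j = fun x : EuclideanSpace ℝ (Fin 2) =>
      ((1 - r ^ 2) / ((r ^ 2 - ‖x‖ ^ 2) * (1 - ‖x‖ ^ 2))) *
        ((if i = j then (1:ℝ) else 0) + 2 * x i * x j / (1 - ‖x‖ ^ 2)) := by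
    intro i j; funext x; exact hB i j x
  -- fderiv of B at 0 is 0
  have hfd : ∀ i j, fderiv ℝ (B i j) x0 = 0 := by
    intro i j
    rw [hBfun i j]
    exact (aux_B_fderiv r hr0 i j).fderiv
  -- Γ vanishes at 0
  have hΓ0 : ∀ k i j, Γ k i j x0 = 0 := by
    intro k i j
    rw [hΓ]
    simp [x0]
  -- ψ = 0
  have hB30 : ∀ i j k, B3 i j k x0 = 0 := by
    intro i j k
    rw [hB3, hfd]
    simp [hΓ0]
  have hψ : ψ = 0 := by
    simp only [ψ]
    simp [hB30]
  -- value of B at 0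
  have hB0 : ∀ i j, B i j x0 = (1 - r ^ 2) / r ^ 2 * (if i = j then 1 else 0) := by
    intro i j
    rw [hB]
    simp [x0]
  have hφ : φ = (1 - r ^ 2) / r ^ 2 * (ξ 0 ^ 2 + ξ 1 ^ 2) := by
    simp only [φ, hB0, Fin.sum_univ_two]
    norm_num
    ring
  have hnx0 : ‖x0‖ = 0 := norm_zero
  have hip : ⟪x0, ξ⟫ = 0 := inner_zero_left ξ
  have hs : 0 < ‖ξ‖ := norm_pos_iff.mpr hξ
  have hsq : ‖ξ‖ ^ 2 = ξ 0 ^ 2 + ξ 1 ^ 2 := by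
    rw [EuclideanSpace.norm_eq, Real.sq_sqrt (by positivity)]
    simp [Fin.sum_univ_two]
  have hα : α = ‖ξ‖ / r := by
    simp only [α, hnx0, hip]
    rw [show (r ^ 2 - 0 ^ 2) * ‖ξ‖ ^ 2 + 0 ^ 2 = (r * ‖ξ‖) ^ 2 by ring,
      Real.sqrt_sq (by positivity)]
    field_simp
    ring
  have hF : F = ‖ξ‖ / r := by
    simp only [F, hα, hip]
    simp
  rw [hψ, hφ, hα, hF, ← hsq]
  have hr : r ≠ 0 := ne_of_gt hr0
  have hsne : ‖ξ‖ ≠ 0 := ne_of_gt hs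
  field_simp
  ring
end
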